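/- Let G be a 2-vertex-connected graph, C a cycle in G, and H an earring of C (a connected component of G − V(C)) with at least 2 clasps. Then for any vertex u of H, there exist two paths from u to two distinct vertices of C that are vertex-disjoint except at u and use only vertices of H together with their endpoints on C. -/

import Mathlib

open SimpleGraph

/-- A graph is 2-vertex-connected: at least 3 vertices and deleting any single
vertex leaves a connected graph. -/
def Graph2Conn {V : Type*} (G : SimpleGraph V) : Prop :=
  3 ≤ Nat.card V ∧ ∀ v : V, (G.induce {w | w ≠ v}).Connected

/-- Vertices outside the cycle `C`. -/
def cycOutside {V : Type*} {G : SimpleGraph V} {o : V} (C : G.Walk o o) : Set V :=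
  {x | x ∉ C.support}

/-- The graph `G - V(C)`, whose connected components are the earrings of `C`. -/
def earGraph {V : Type*} {G : SimpleGraph V} {o : V} (C : G.Walk o o) :
    SimpleGraph ↥(cycOutside C) :=
  G.induce (cycOutside C)

/-- `x` is a clasp of the earring `K`: it lies on `C` and is adjacent to `K`. -/
def isClasp {V : Type*} {G : SimpleGraph V} {o : V} (C : G.Walk o o)
    (K : (earGraph C).ConnectedComponent) (x : V) : Prop :=
  x ∈ C.support ∧
    ∃ y : ↥(cycOutside C), (earGraph C).connectedComponentMk y = K ∧ G.Adj x ↑y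

/-- `x` is a vertex of the earring `K`. -/
def inEarring {V : Type*} {G : SimpleGraph V} {o : V} (C : G.Walk o o)
    (K : (earGraph C).ConnectedComponent) (x : V) : Prop :=
  ∃ hx : x ∈ cycOutside C, (earGraph C).connectedComponentMk ⟨x, hx⟩ = K


section Helpers
variable {V : Type*} {G : SimpleGraph V}


lemma isPath_append_of_sep {a b c : V} {p : G.Walk a b} {q : G.Walk b c}
    (hp : p.IsPath) (hq : q.IsPath)
    (hsep : ∀ x ∈ p.support, x ∈ q.support → x = b) : (p.append q).IsPath := by
  rw [Walk.isPath_def, Walk.support_append]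
  refine List.Nodup.append hp.support_nodup (hq.support_nodup.tail) ?_
  intro x hxp hxq
  have hxq' : x ∈ q.support := List.mem_of_mem_tail hxq
  have hxb : x = b := hsep x hxp hxq'
  subst hxb
  have := hq.support_nodup
  rw [q.support_eq_cons] at this
  exact List.Nodup.notMem this hxq

lemma exists_prefix_to_set [DecidableEq V] (T : Set V) : ∀ {a b : V} (W : G.Walk a b), b ∈ T →
    ∃ c, c ∈ T ∧ ∃ P : G.Walk a c, P.IsPath ∧ (∀ x ∈ P.support, x ∈ T → x = c) ∧
      (∀ x ∈ P.support, x ∈ W.support) := by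
  have walkver : ∀ {a b : V} (W : G.Walk a b), b ∈ T →
      ∃ c, c ∈ T ∧ ∃ P : G.Walk a c, (∀ x ∈ P.support, x ∈ T → x = c) ∧
        (∀ x ∈ P.support, x ∈ W.support) := by
    intro a b W
    induction W with
    | nil =>
      intro hb
      exact ⟨_, hb, Walk.nil, by simp +contextual, by simp⟩
    | @cons a v b h W ih =>
      intro hb
      by_cases ha : a ∈ T
      · exact ⟨_, ha, Walk.nil, by simp +contextual, by simp⟩
      · obtain ⟨c, hc, P, hprop, hsub⟩ := ih hb
        refine ⟨c, hc, Walk.cons h P, ?_, ?_⟩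
        · intro x hx hxT
          rcases List.mem_cons.mp hx with rfl | hx
          · exact absurd hxT ha
          · exact hprop x hx hxT
        · intro x hx
          rcases List.mem_cons.mp hx with rfl | hx
          · exact List.mem_cons_self
          · exact List.mem_cons_of_mem _ (hsub x hx)
  intro a b W hb
  obtain ⟨c, hc, P, hprop, hsub⟩ := walkver W hb
  exact ⟨c, hc, P.bypass, P.bypass_isPath,
    fun x hx => hprop x (P.support_bypass_subset hx),
    fun x hx => hsub x (P.support_bypass_subset hx)⟩

lemma start_eq_of_mem_dropUntil [DecidableEq V] {a b w : V} {p : G.Walk a b}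
    (hp : p.IsPath) (hw : w ∈ p.support) (ha : a ∈ (p.dropUntil w hw).support) : a = w := by
  by_contra hne
  have hsplit : p.support = (p.takeUntil w hw).support ++ (p.dropUntil w hw).support.tail := by
    conv_lhs => rw [← p.take_spec hw]
    exact Walk.support_append _ _
  have ha' : a ∈ (p.dropUntil w hw).support.tail := by
    rw [(p.dropUntil w hw).support_eq_cons] at ha
    rcases List.mem_cons.mp ha with h | h
    · exact absurd h hne
    · exact h
  have hnd := hp.support_nodup
  rw [hsplit] at hnd
  exact (List.disjoint_of_nodup_append hnd) (Walk.start_mem_support _) ha'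

lemma walk_avoiding (hG : Graph2Conn G) (v : V) {a b : V} (ha : a ≠ v) (hb : b ≠ v) :
    ∃ W : G.Walk a b, v ∉ W.support := by
  obtain ⟨w⟩ := (hG.2 v).preconnected ⟨a, ha⟩ ⟨b, hb⟩
  refine ⟨w.map (Embedding.induce {w | w ≠ v}).toHom, ?_⟩
  intro hmem0
  have hmem : v ∈ (w.map (Embedding.induce {w | w ≠ v}).toHom).support := hmem0
  rw [Walk.support_map] at hmem
  obtain ⟨⟨y, hy⟩, -, heq⟩ := List.mem_map.mp hmem
  exact hy heq

lemma cycle_exists_other {o : V} {C : G.Walk o o} (hC : C.IsCycle) (c : V) :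
    ∃ c', c' ∈ C.support ∧ c' ≠ c := by
  have h3 : 3 ≤ C.length := hC.three_le_length
  have hlen : C.support.tail.length = C.length := by
    have := C.length_support
    have h2 : C.support.length = C.support.tail.length + 1 := by
      rw [C.support_eq_cons]; simp
    omega
  have h0 : 0 < C.support.tail.length := by omega
  have h1 : 1 < C.support.tail.length := by omega
  set t := C.support.tail with ht
  have hnd : t.Nodup := hC.support_nodup
  have hne : t.get ⟨0, h0⟩ ≠ t.get ⟨1, h1⟩ := by
    intro he
    have := (List.Nodup.get_inj_iff hnd).mp he
    simp at this
  have hm0 : t.get ⟨0, h0⟩ ∈ C.support := List.mem_of_mem_tail (List.get_mem _ _)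
  have hm1 : t.get ⟨1, h1⟩ ∈ C.support := List.mem_of_mem_tail (List.get_mem _ _)
  rcases eq_or_ne (t.get ⟨0, h0⟩) c with rfl | hok
  · exact ⟨_, hm1, fun he => hne he.symm⟩
  · exact ⟨_, hm0, hok⟩

lemma key_lemma [DecidableEq V] (hG : Graph2Conn G) {o : V} (C : G.Walk o o) (hC : C.IsCycle) :
    ∀ {u c : V} (W : G.Walk u c), u ∉ C.support → c ∈ C.support →
      (∀ x ∈ W.support, x ∈ C.support → x = c) →
      ∃ c1 c2, c1 ∈ C.support ∧ c2 ∈ C.support ∧ c1 ≠ c2 ∧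
        ∃ (P1 : G.Walk u c1) (P2 : G.Walk u c2), P1.IsPath ∧ P2.IsPath ∧
          (∀ x ∈ P1.support, x ∈ P2.support → x = u) ∧
          (∀ x ∈ P1.support, x ∈ C.support → x = c1) ∧
          (∀ x ∈ P2.support, x ∈ C.support → x = c2) := by
  intro u c W
  induction W with
  | nil => exact fun hu hc _ => absurd hc hu
  | @cons u v c h W ih =>
    intro hu hc hint
    by_cases hvC : v ∈ C.support
    · -- base case: u adjacent to v = c ∈ C
      have hvc : v = c := hint v (by simp) hvC
      subst hvc
      obtain ⟨c', hc'mem, hc'ne⟩ := cycle_exists_other hC v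
      have hune : u ≠ v := h.ne
      obtain ⟨R, hR⟩ := walk_avoiding hG v hune hc'ne
      obtain ⟨c2, hc2C, Q, hQpath, hQprop, hQsub⟩ :=
        exists_prefix_to_set {x | x ∈ C.support} R hc'mem
      have hc2ne : c2 ≠ v := fun he => hR (he ▸ hQsub c2 Q.end_mem_support)
      refine ⟨v, c2, hvC, hc2C, Ne.symm hc2ne, Walk.cons h Walk.nil, Q,
        Walk.IsPath.nil.cons (by simpa using hune), hQpath, ?_, ?_, hQprop⟩
      · intro x hx hxQ
        rcases List.mem_cons.mp hx with rfl | hx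
        · rfl
        · simp only [Walk.support_nil, List.mem_singleton] at hx
          subst hx
          exact absurd (hQsub x hxQ) hR
      · intro x hx hxC
        rcases List.mem_cons.mp hx with rfl | hx
        · exact absurd hxC hu
        · simpa using hx
    · have hint' : ∀ x ∈ W.support, x ∈ C.support → x = c :=
        fun x hx => hint x (List.mem_cons_of_mem _ hx)
      obtain ⟨c1, c2, hc1, hc2, hne, P1, P2, hP1, hP2, hshare, hPC1, hPC2⟩ := ih hvC hc hint'
      have huv : u ≠ v := h.ne
      by_cases hu1 : u ∈ P1.support
      · by_cases hu2 : u ∈ P2.support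
        · exact absurd (hshare u hu1 hu2) huv
        · refine ⟨c1, c2, hc1, hc2, hne, P1.dropUntil u hu1, Walk.cons h P2,
            hP1.dropUntil hu1, hP2.cons hu2, ?_, ?_, ?_⟩
          · intro x hxA hxB
            rcases List.mem_cons.mp hxB with rfl | hx2
            · rfl
            · have hx1 : x ∈ P1.support := Walk.support_dropUntil_subset _ hu1 hxA
              have hxv : x = v := hshare x hx1 hx2
              subst hxv
              exact start_eq_of_mem_dropUntil hP1 hu1 hxA
          · intro x hxA hxC
            exact hPC1 x (Walk.support_dropUntil_subset _ hu1 hxA) hxC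
          · intro x hxB hxC
            rcases List.mem_cons.mp hxB with rfl | hx2
            · exact absurd hxC hu
            · exact hPC2 x hx2 hxC
      · by_cases hu2 : u ∈ P2.support
        · refine ⟨c1, c2, hc1, hc2, hne, Walk.cons h P1, P2.dropUntil u hu2,
            hP1.cons hu1, hP2.dropUntil hu2, ?_, ?_, ?_⟩
          · intro x hxA hxB
            rcases List.mem_cons.mp hxA with rfl | hx1
            · rfl
            · have hx2 : x ∈ P2.support := Walk.support_dropUntil_subset _ hu2 hxB
              have hxv : x = v := hshare x hx1 hx2
              subst hxv
              exact start_eq_of_mem_dropUntil hP2 hu2 hxB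
          · intro x hxA hxC
            rcases List.mem_cons.mp hxA with rfl | hx1
            · exact absurd hxC hu
            · exact hPC1 x hx1 hxC
          · intro x hxB hxC
            exact hPC2 x (Walk.support_dropUntil_subset _ hu2 hxB) hxC
        · -- u on neither path: reroute through G - v
          have hvc1 : c1 ≠ v := fun he => hvC (he ▸ hc1)
          obtain ⟨R, hRv⟩ := walk_avoiding hG v huv hvc1
          obtain ⟨w, hwT, Q, hQpath, hQprop, hQsub⟩ :=
            exists_prefix_to_set {x | x ∈ C.support ∨ x ∈ P1.support ∨ x ∈ P2.support} R
              (Or.inl hc1)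
          have hwv : w ≠ v := fun he => hRv (he ▸ hQsub w Q.end_mem_support)
          by_cases hw1 : w ∈ P1.support
          · have hsep : ∀ x ∈ Q.support, x ∈ (P1.dropUntil w hw1).support → x = w :=
              fun x hx hxD =>
                hQprop x hx (Or.inr (Or.inl (Walk.support_dropUntil_subset _ hw1 hxD)))
            refine ⟨c1, c2, hc1, hc2, hne, Q.append (P1.dropUntil w hw1), Walk.cons h P2,
              isPath_append_of_sep hQpath (hP1.dropUntil hw1) hsep, hP2.cons hu2, ?_, ?_, ?_⟩
            · intro x hxA hxB
              rcases List.mem_cons.mp hxB with rfl | hx2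
              · rfl
              · rcases (Walk.mem_support_append_iff _ _).mp hxA with hxQ | hxD
                · have hxw : x = w := hQprop x hxQ (Or.inr (Or.inr hx2))
                  subst hxw
                  exact absurd (hshare x hw1 hx2) hwv
                · have hx1 : x ∈ P1.support := Walk.support_dropUntil_subset _ hw1 hxD
                  have hxv : x = v := hshare x hx1 hx2
                  subst hxv
                  exact absurd (start_eq_of_mem_dropUntil hP1 hw1 hxD) (Ne.symm hwv)
            · intro x hxA hxC
              rcases (Walk.mem_support_append_iff _ _).mp hxA with hxQ | hxD
              · have hxw : x = w := hQprop x hxQ (Or.inl hxC)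
                subst hxw
                exact hPC1 x hw1 hxC
              · exact hPC1 x (Walk.support_dropUntil_subset _ hw1 hxD) hxC
            · intro x hxB hxC
              rcases List.mem_cons.mp hxB with rfl | hx2
              · exact absurd hxC hu
              · exact hPC2 x hx2 hxC
          · by_cases hw2 : w ∈ P2.support
            · have hsep : ∀ x ∈ Q.support, x ∈ (P2.dropUntil w hw2).support → x = w :=
                fun x hx hxD =>
                  hQprop x hx (Or.inr (Or.inr (Walk.support_dropUntil_subset _ hw2 hxD)))
              refine ⟨c1, c2, hc1, hc2, hne, Walk.cons h P1, Q.append (P2.dropUntil w hw2),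
                hP1.cons hu1, isPath_append_of_sep hQpath (hP2.dropUntil hw2) hsep, ?_, ?_, ?_⟩
              · intro x hxA hxB
                rcases List.mem_cons.mp hxA with rfl | hx1
                · rfl
                · rcases (Walk.mem_support_append_iff _ _).mp hxB with hxQ | hxD
                  · have hxw : x = w := hQprop x hxQ (Or.inr (Or.inl hx1))
                    subst hxw
                    exact absurd hx1 hw1
                  · have hx2 : x ∈ P2.support := Walk.support_dropUntil_subset _ hw2 hxD
                    have hxv : x = v := hshare x hx1 hx2
                    subst hxv
                    exact absurd (start_eq_of_mem_dropUntil hP2 hw2 hxD) (Ne.symm hwv)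
              · intro x hxA hxC
                rcases List.mem_cons.mp hxA with rfl | hx1
                · exact absurd hxC hu
                · exact hPC1 x hx1 hxC
              · intro x hxB hxC
                rcases (Walk.mem_support_append_iff _ _).mp hxB with hxQ | hxD
                · have hxw : x = w := hQprop x hxQ (Or.inl hxC)
                  subst hxw
                  exact hPC2 x hw2 hxC
                · exact hPC2 x (Walk.support_dropUntil_subset _ hw2 hxD) hxC
            · have hwC : w ∈ C.support := by
                rcases hwT with h1 | h2 | h3
                · exact h1
                · exact absurd h2 hw1
                · exact absurd h3 hw2
              have hwc1 : w ≠ c1 := fun he => hw1 (he ▸ P1.end_mem_support)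
              refine ⟨w, c1, hwC, hc1, hwc1, Q, Walk.cons h P1, hQpath, hP1.cons hu1, ?_,
                fun x hx hxC => hQprop x hx (Or.inl hxC), ?_⟩
              · intro x hxQ hxB
                rcases List.mem_cons.mp hxB with rfl | hx1
                · rfl
                · have hxw : x = w := hQprop x hxQ (Or.inr (Or.inl hx1))
                  subst hxw
                  exact absurd hx1 hw1
              · intro x hxB hxC
                rcases List.mem_cons.mp hxB with rfl | hx1
                · exact absurd hxC hu
                · exact hPC1 x hx1 hxC



/-- Internal vertices of a `C`-avoiding path from `u` are reachable from `u` in `earGraph C`. -/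
lemma reach_of_internal_avoid {o : V} {C : G.Walk o o} :
    ∀ {u c : V} (P : G.Walk u c), P.IsPath →
      (∀ x ∈ P.support, x ∈ C.support → x = c) → ∀ (hu : u ∉ C.support),
      ∀ x ∈ P.support, x ≠ c →
        ∃ hx : x ∉ C.support,
          (earGraph C).Reachable ⟨u, hu⟩ ⟨x, hx⟩ := by
  intro u c P
  induction P with
  | nil =>
    intro _ _ hu x hx hxc
    rcases List.mem_cons.mp hx with rfl | h
    · exact absurd rfl hxc
    · simp at h
  | @cons u v c h P ih =>
    intro hP hint hu x hx hxc
    rcases List.mem_cons.mp hx with rfl | hx'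
    · exact ⟨hu, Reachable.refl _⟩
    · by_cases hvC : v ∈ C.support
      · have hvc : v = c := hint v (by simp) hvC
        subst hvc
        have : P = Walk.nil := Walk.isPath_iff_eq_nil.mp hP.of_cons
        subst this
        simp at hx'
        exact absurd hx' hxc
      · have hadj : (earGraph C).Adj ⟨u, hu⟩ ⟨v, hvC⟩ := by
          simp only [earGraph, comap_adj, Function.Embedding.coe_subtype]
          exact h
        obtain ⟨hxC, hreach⟩ := ih hP.of_cons
          (fun y hy hyC => hint y (List.mem_cons_of_mem _ hy) hyC) hvC x hx' hxc
        exact ⟨hxC, (hadj.reachable).trans hreach⟩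

/-- A 2-connected graph is preconnected. -/
lemma preconn_of_2conn (hG : Graph2Conn G) : G.Preconnected := by
  classical
  intro a b
  rcases eq_or_ne a b with rfl | hab
  · exact Reachable.refl _
  haveI : Finite V := Nat.finite_of_card_ne_zero (by have := hG.1; omega)
  haveI := Fintype.ofFinite V
  have h3 : 3 ≤ Fintype.card V := by
    have := hG.1; rwa [Nat.card_eq_fintype_card] at this
  have : ∃ v, v ∉ ({a, b} : Finset V) := by
    by_contra h
    push_neg at h
    have hsub : (Finset.univ : Finset V) ⊆ {a, b} := fun v _ => h v
    have h1 := Finset.card_le_card hsub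
    have h2 : ({a, b} : Finset V).card ≤ 2 :=
      (Finset.card_insert_le a {b}).trans (by simp)
    simp only [Finset.card_univ] at h1
    omega
  obtain ⟨v, hv⟩ := this
  simp only [Finset.mem_insert, Finset.mem_singleton, not_or] at hv
  obtain ⟨W, -⟩ := walk_avoiding hG v (Ne.symm hv.1) (Ne.symm hv.2)
  exact ⟨W⟩

end Helpers

theorem two_disjoint_paths_from_earring_to_cycle
    {V : Type*} {G : SimpleGraph V} (hG : Graph2Conn G)
    {o : V} (C : G.Walk o o) (hC : C.IsCycle)
    (K : (earGraph C).ConnectedComponent)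
    -- K has at least 2 clasps
    (hclasps : ∃ x y : V, x ≠ y ∧ isClasp C K x ∧ isClasp C K y)
    (u : V) (hu : inEarring C K u) :
    ∃ c1 c2 : V, c1 ∈ C.support ∧ c2 ∈ C.support ∧ c1 ≠ c2 ∧
      ∃ (P1 : G.Walk u c1) (P2 : G.Walk u c2), P1.IsPath ∧ P2.IsPath ∧
        -- the two paths share only the vertex u
        (∀ x ∈ P1.support, x ∈ P2.support → x = u) ∧
        -- each path uses only vertices of the earring plus its endpoint on C
        (∀ x ∈ P1.support, x ≠ c1 → inEarring C K x) ∧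
        (∀ x ∈ P2.support, x ≠ c2 → inEarring C K x) := by
  classical
  obtain ⟨huC, hKu⟩ := hu
  have huC' : u ∉ C.support := huC
  obtain ⟨W0⟩ := preconn_of_2conn hG u o
  obtain ⟨c, hcC, Q, hQpath, hQprop, -⟩ :=
    exists_prefix_to_set {x | x ∈ C.support} W0 C.start_mem_support
  obtain ⟨c1, c2, hc1, hc2, hne, P1, P2, hP1, hP2, hshare, hPC1, hPC2⟩ :=
    key_lemma hG C hC Q huC' hcC hQprop
  refine ⟨c1, c2, hc1, hc2, hne, P1, P2, hP1, hP2, hshare, ?_, ?_⟩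
  · intro x hx hxc
    obtain ⟨hxC, hreach⟩ := reach_of_internal_avoid P1 hP1 hPC1 huC' x hx hxc
    exact ⟨hxC, by rw [← hKu]; exact ConnectedComponent.sound hreach.symm⟩
  · intro x hx hxc
    obtain ⟨hxC, hreach⟩ := reach_of_internal_avoid P2 hP2 hPC2 huC' x hx hxc
    exact ⟨hxC, by rw [← hKu]; exact ConnectedComponent.sound hreach.symm⟩
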